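/- arXiv:1406.0904 — 2 statements merged into one kernel-verified Lean document; each statement's English description precedes it below -/
import Mathlib

section
/- Let R be a Banach space and let R^(γ) denote its γ-th transfinite dual. Then for every odd ordinal γ, the space R^(γ) is finitely representable in R* = R^(1). -/
/-- `X` is finitely representable in `Y`: for every `ε > 0` and every finite-dimensional
subspace `F ⊆ X` there is a linear map `T : F → Y` with
`(1 − ε)‖x‖ ≤ ‖T x‖ ≤ (1 + ε)‖x‖` for all `x ∈ F`. -/
def FinitelyRepresentable (X Y : Type*) [NormedAddCommGroup X] [NormedSpace ℝ X]
    [NormedAddCommGroup Y] [NormedSpace ℝ Y] : Prop :=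
  ∀ ε : ℝ, 0 < ε → ∀ F : Subspace ℝ X, FiniteDimensional ℝ F →
    ∃ T : F →ₗ[ℝ] Y, ∀ x : F, (1 - ε) * ‖x‖ ≤ ‖T x‖ ∧ ‖T x‖ ≤ (1 + ε) * ‖x‖

/-- A Banach space `X` is superreflexive if every Banach space finitely representable
in `X` is reflexive (i.e. the canonical embedding into the bidual is surjective). -/
def IsSuperreflexive (X : Type u) [NormedAddCommGroup X] [NormedSpace ℝ X] : Prop :=
  ∀ (Y : Type u) [NormedAddCommGroup Y] [NormedSpace ℝ Y] [CompleteSpace Y],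
    FinitelyRepresentable Y X → Function.Surjective (NormedSpace.inclusionInDoubleDual ℝ Y)

universe u

/-- An ordinal is *even* if it is `0`, a limit ordinal, or of the form `β + 2n`
with `β` zero or a limit ordinal and `n ∈ ℕ`. -/
def IsEvenOrdinal (α : Ordinal.{0}) : Prop :=
  ∃ (β : Ordinal.{0}) (n : ℕ), (β = 0 ∨ Order.IsSuccLimit β) ∧ α = β + 2 * n

/-- An ordinal is *odd* if it is the successor of an even ordinal. -/
def IsOddOrdinal (γ : Ordinal.{0}) : Prop :=
  ∃ α : Ordinal.{0}, IsEvenOrdinal α ∧ γ = α + 1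

/-- The family `space : Ordinal → Type u` realizes the transfinite duals of `R`:
`space 0` is (isometric to) `R`, `space (α+1)` is (isometric to) the dual of `space α`,
and for an even `γ` the spaces `space β` for even `β < γ` sit inside `space γ` via a
compatible system of isometric embeddings `incl` which on the steps `β ↦ β + 2` is the
canonical embedding of a space into its bidual, and whose ranges have dense union in
`space α` when `α` is a limit ordinal (so `space α` is the completion of the union). -/
def IsTransfiniteDualSystem
    (R : Type u) [NormedAddCommGroup R] [NormedSpace ℝ R] [CompleteSpace R]
    (space : Ordinal.{0} → Type u)
    [∀ α, NormedAddCommGroup (space α)] [∀ α, NormedSpace ℝ (space α)]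
    [∀ α, CompleteSpace (space α)]
    (zeroEquiv : space 0 ≃ₗᵢ[ℝ] R)
    (succEquiv : ∀ α, space (α + 1) ≃ₗᵢ[ℝ] StrongDual ℝ (space α))
    (incl : ∀ β γ, β < γ → IsEvenOrdinal β → IsEvenOrdinal γ → (space β →ₗᵢ[ℝ] space γ)) :
    Prop :=
  (∀ β γ δ (h1 : β < γ) (h2 : γ < δ) (hβ : IsEvenOrdinal β) (hγ : IsEvenOrdinal γ)
      (hδ : IsEvenOrdinal δ) (x : space β),
      incl γ δ h2 hγ hδ (incl β γ h1 hβ hγ x) = incl β δ (h1.trans h2) hβ hδ x) ∧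
  (∀ β (hβ : IsEvenOrdinal β) (h2 : IsEvenOrdinal (β + 1 + 1)) (hlt : β < β + 1 + 1)
      (x : space β),
      incl β (β + 1 + 1) hlt hβ h2 x
        = (succEquiv (β + 1)).symm
            ((NormedSpace.inclusionInDoubleDual ℝ (space β) x).comp
              ((succEquiv β).toContinuousLinearEquiv :
                space (β + 1) →L[ℝ] StrongDual ℝ (space β)))) ∧
  (∀ α (hlim : Order.IsSuccLimit α) (hα : IsEvenOrdinal α),
      Dense (⋃ (β : Ordinal.{0}) (h : β < α) (hβ : IsEvenOrdinal β),
        Set.range (incl β α h hβ hα)))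


open NormedSpace

variable {X : Type*} [NormedAddCommGroup X] [NormedSpace ℝ X]

/-- The continuous linear insertion of a coordinate in a finite product. -/
def cSingle (ι : Type*) [Fintype ι] [DecidableEq ι] (k : ι) : X →L[ℝ] (ι → X) where
  toLinearMap := LinearMap.single ℝ (fun _ => X) k
  cont := by
    apply continuous_pi
    intro j
    by_cases hj : j = k
    · subst hj
      exact continuous_id.congr (fun x => by simp)
    · exact (continuous_const (y := (0:X))).congr
        (fun x : X => by simp [LinearMap.single_apply, Pi.single_apply, hj])

lemma cSingle_apply {ι : Type*} [Fintype ι] [DecidableEq ι] (k : ι) (x : X) :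
    cSingle ι k x = Pi.single k x := rfl

example : True := trivial


section FRBasic

variable {X Y Z W : Type*} [NormedAddCommGroup X] [NormedSpace ℝ X]
  [NormedAddCommGroup Y] [NormedSpace ℝ Y] [NormedAddCommGroup Z] [NormedSpace ℝ Z]
  [NormedAddCommGroup W] [NormedSpace ℝ W]

/-- Precompose an FR witness by an almost-isometric linear map. -/
lemma FinitelyRepresentable.step (h : FinitelyRepresentable Z W)
    {F : Subspace ℝ X} [FiniteDimensional ℝ F] (ρ : F →ₗ[ℝ] Z) (a b : ℝ)
    (ha : 0 ≤ a) (hab : ∀ v : F, a * ‖v‖ ≤ ‖ρ v‖ ∧ ‖ρ v‖ ≤ b * ‖v‖) (ε' : ℝ) (hε' : 0 < ε') :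
    ∃ T : F →ₗ[ℝ] W, ∀ v : F, (1 - ε') * (a * ‖v‖) ≤ ‖T v‖ ∧ ‖T v‖ ≤ (1 + ε') * (b * ‖v‖) := by
  set G : Subspace ℝ Z := LinearMap.range ρ with hG
  haveI : FiniteDimensional ℝ G := Module.Finite.range ρ
  obtain ⟨T₂, hT₂⟩ := h ε' hε' G inferInstance
  refine ⟨T₂.comp (ρ.rangeRestrict), fun v => ?_⟩
  have h2 := hT₂ (ρ.rangeRestrict v)
  have hnorm : ‖ρ.rangeRestrict v‖ = ‖ρ v‖ := rfl
  rw [hnorm] at h2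
  have hv := hab v
  constructor
  · rcases le_or_gt (1 - ε') 0 with hca | hca
    · have : (1 - ε') * (a * ‖v‖) ≤ 0 :=
        mul_nonpos_of_nonpos_of_nonneg hca (by positivity)
      exact this.trans (norm_nonneg _)
    · exact le_trans (mul_le_mul_of_nonneg_left hv.1 hca.le) h2.1
  · refine le_trans h2.2 ?_
    exact mul_le_mul_of_nonneg_left hv.2 (by linarith)

lemma FinitelyRepresentable.of_isometry (J : X →ₗᵢ[ℝ] Y) : FinitelyRepresentable X Y := by
  intro ε hε F _
  refine ⟨J.toLinearMap.comp F.subtype, fun x => ?_⟩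
  have : ‖J.toLinearMap (F.subtype x)‖ = ‖x‖ := J.norm_map _
  simp only [LinearMap.comp_apply, this]
  constructor
  · nlinarith [norm_nonneg x]
  · nlinarith [norm_nonneg x]

lemma eps_third_bounds {ε : ℝ} (hε : 0 < ε) :
    0 < min ε 1 / 3 ∧ (1 - min ε 1 / 3) * (1 - min ε 1 / 3) ≥ 1 - ε ∧
      (1 + min ε 1 / 3) * (1 + min ε 1 / 3) ≤ 1 + ε := by
  have h1 : min ε 1 ≤ ε := min_le_left _ _
  have h2 : min ε 1 ≤ 1 := min_le_right _ _
  have h0 : 0 < min ε 1 := lt_min hε one_pos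
  refine ⟨by positivity, by nlinarith, by nlinarith⟩

lemma FinitelyRepresentable.trans (hXY : FinitelyRepresentable X Y)
    (hYZ : FinitelyRepresentable Y Z) : FinitelyRepresentable X Z := by
  intro ε hε F hF
  obtain ⟨he0, helow, hehigh⟩ := eps_third_bounds hε
  set e := min ε 1 / 3 with he
  obtain ⟨T₁, hT₁⟩ := hXY e he0 F hF
  obtain ⟨T, hT⟩ := hYZ.step T₁ (1 - e) (1 + e)
    (show (0:ℝ) ≤ 1 - e by have := min_le_right ε 1; rw [he]; linarith)
    (fun v => ⟨(hT₁ v).1, (hT₁ v).2⟩) e he0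
  refine ⟨T, fun v => ?_⟩
  have h := hT v
  have hn : (0:ℝ) ≤ ‖v‖ := norm_nonneg v
  constructor
  · refine le_trans ?_ h.1; nlinarith
  · refine le_trans h.2 ?_; nlinarith

lemma FinitelyRepresentable.congr_left (e : X ≃ₗᵢ[ℝ] Y) (h : FinitelyRepresentable Y Z) :
    FinitelyRepresentable X Z :=
  (FinitelyRepresentable.of_isometry e.toLinearIsometry).trans h

lemma FinitelyRepresentable.congr_right (e : Y ≃ₗᵢ[ℝ] Z) (h : FinitelyRepresentable X Y) :
    FinitelyRepresentable X Z :=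
  h.trans (FinitelyRepresentable.of_isometry e.toLinearIsometry)

end FRBasic

/-- scaling a sphere bound to a global bound -/
lemma sphere_bounds_global {E Y : Type*} [NormedAddCommGroup E] [NormedSpace ℝ E]
    [NormedAddCommGroup Y] [NormedSpace ℝ Y] (T : E →ₗ[ℝ] Y) (a b : ℝ)
    (h : ∀ v : E, ‖v‖ = 1 → a ≤ ‖T v‖ ∧ ‖T v‖ ≤ b) (v : E) :
    a * ‖v‖ ≤ ‖T v‖ ∧ ‖T v‖ ≤ b * ‖v‖ := by
  rcases eq_or_ne v 0 with rfl | hv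
  · simp
  · have hnv : (0:ℝ) < ‖v‖ := norm_pos_iff.2 hv
    set w : E := ‖v‖⁻¹ • v with hw
    have hwu : ‖w‖ = 1 := by
      rw [hw, norm_smul, norm_inv, norm_norm, inv_mul_cancel₀ hnv.ne']
    have hTv : T v = ‖v‖ • T w := by
      rw [hw, map_smul, smul_smul, mul_inv_cancel₀ hnv.ne', one_smul]
    have hTn : ‖T v‖ = ‖v‖ * ‖T w‖ := by
      rw [hTv, norm_smul, norm_norm]
    obtain ⟨h1, h2⟩ := h w hwu
    constructor
    · rw [hTn, mul_comm a ‖v‖]; exact mul_le_mul_of_nonneg_left h1 hnv.le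
    · rw [hTn, mul_comm b ‖v‖]; exact mul_le_mul_of_nonneg_left h2 hnv.le

set_option maxHeartbeats 2000000 in
set_option synthInstance.maxHeartbeats 1000000 in
theorem bidual_finitelyRepresentable (X : Type*) [NormedAddCommGroup X] [NormedSpace ℝ X] :
    FinitelyRepresentable (StrongDual ℝ (StrongDual ℝ X)) X := by
  classical
  intro ε hε F hF
  set ε₀ : ℝ := min ε 1 / 8 with hε₀def
  have hε₀pos : 0 < ε₀ := by positivity
  have hε₀ε : ε₀ ≤ ε / 8 := by
    rw [hε₀def]; have := min_le_left ε 1; linarith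
  have hε₀8 : ε₀ ≤ 1 / 8 := by
    rw [hε₀def]; have := min_le_right ε 1; linarith
  -- the compact unit sphere of F and a finite ε₀-net in it
  haveI := hF
  set S : Set F := Metric.sphere (0 : F) 1 with hSdef
  have hScomp : IsCompact S := isCompact_sphere _ _
  have hScover : S ⊆ ⋃ y ∈ S, Metric.ball y ε₀ := fun y hy =>
    Set.mem_iUnion₂.2 ⟨y, hy, Metric.mem_ball_self hε₀pos⟩
  obtain ⟨t, hts, htfin, htcover⟩ :=
    hScomp.elim_finite_subcover_image (fun y _ => Metric.isOpen_ball) hScover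
  haveI : Fintype ↥t := htfin.fintype
  set ι := ↥t
  set u : ι → F := fun k => (k : F) with hu
  have hunorm : ∀ k : ι, ‖u k‖ = 1 := by
    intro k
    have := hts k.2
    rwa [hSdef, mem_sphere_iff_norm, sub_zero] at this
  have hunorm' : ∀ k : ι, ‖((u k : F) : StrongDual ℝ (StrongDual ℝ X))‖ = 1 := fun k => hunorm k
  -- norming functionals
  have hex : ∀ k : ι, ∃ hk : StrongDual ℝ X, ‖hk‖ ≤ 1 ∧
      1 - ε₀ < ((u k : F) : StrongDual ℝ (StrongDual ℝ X)) hk := by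
    intro k
    have h1 : 1 - ε₀ < ‖((u k : F) : StrongDual ℝ (StrongDual ℝ X))‖ := by
      rw [hunorm']; linarith
    obtain ⟨x, hx1, hx2⟩ := ContinuousLinearMap.exists_lt_apply_of_lt_opNorm _ h1
    rcases le_or_gt 0 (((u k : F) : StrongDual ℝ (StrongDual ℝ X)) x) with hpos | hneg
    · exact ⟨x, hx1.le, by rwa [Real.norm_eq_abs, abs_of_nonneg hpos] at hx2⟩
    · refine ⟨-x, by simpa using hx1.le, ?_⟩
      rw [map_neg]
      rwa [Real.norm_eq_abs, abs_of_neg hneg] at hx2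
  choose h hh1 hh2 using hex
  -- product-space setup
  set Ψ : (F →ₗ[ℝ] X) →ₗ[ℝ] (ι → X) := LinearMap.pi (fun k => LinearMap.applyₗ (u k)) with hΨ
  set S' : Subspace ℝ (ι → X) := LinearMap.range Ψ with hS'
  set Q : (ι → X) →L[ℝ] (ι → ℝ) :=
    ContinuousLinearMap.pi (fun j => (h j).comp (ContinuousLinearMap.proj j)) with hQ
  set c : ι → ℝ := fun j => ((u j : F) : StrongDual ℝ (StrongDual ℝ X)) (h j) with hc
  have hQapp : ∀ (z : ι → X) (k : ι), Q z k = h k (z k) := fun z k => rfl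
  have hΨapp : ∀ (T : F →ₗ[ℝ] X) (k : ι), Ψ T k = T (u k) := fun T k => rfl
  have hcmem : c ∈ closure (Q '' ((S' : Set (ι → X)) ∩ Metric.closedBall 0 1)) := by
    by_contra hcon
    have hconv : Convex ℝ (closure (Q '' ((S' : Set (ι → X)) ∩ Metric.closedBall 0 1))) := by
      apply Convex.closure
      exact ((S'.convex).inter (convex_closedBall _ _)).linear_image Q.toLinearMap
    obtain ⟨f, uu, hfD, hfc⟩ := geometric_hahn_banach_closed_point hconv isClosed_closure hcon
    have hmemD : ∀ w : S', ‖(w : ι → X)‖ ≤ 1 →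
        Q (w : ι → X) ∈ closure (Q '' ((S' : Set (ι → X)) ∩ Metric.closedBall 0 1)) := by
      intro w hw
      exact subset_closure ⟨w, ⟨w.2, by simpa [Metric.mem_closedBall, dist_zero_right] using hw⟩, rfl⟩
    have huu0 : 0 < uu := by
      have h0 := hfD _ (hmemD 0 (by simp))
      simpa using h0
    set φS : S' →L[ℝ] ℝ := (f.comp Q).comp S'.subtypeL with hφS
    have hφSapp : ∀ w : S', φS w = f (Q (w : ι → X)) := fun w => rfl
    have hφSle : ‖φS‖ ≤ uu := by
      refine ContinuousLinearMap.opNorm_le_bound _ huu0.le (fun z => ?_)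
      rcases eq_or_ne z 0 with rfl | hz
      · simp
      · have hnz : (0:ℝ) < ‖z‖ := norm_pos_iff.2 hz
        set w : S' := ‖z‖⁻¹ • z with hw
        have hwn : ‖(w : ι → X)‖ ≤ 1 := by
          rw [hw]
          push_cast [Submodule.coe_smul]
          rw [norm_smul, norm_inv, norm_norm]
          exact le_of_eq (inv_mul_cancel₀ hnz.ne')
        have hwn' : ‖((-w : S') : ι → X)‖ ≤ 1 := by
          rwa [Submodule.coe_neg, norm_neg]
        have h1 : f (Q (w : ι → X)) < uu := hfD _ (hmemD w hwn)
        have h2 : f (Q ((-w : S') : ι → X)) < uu := hfD _ (hmemD (-w) hwn')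
        have h2' : -(f (Q (w : ι → X))) < uu := by
          rw [Submodule.coe_neg, map_neg, map_neg] at h2
          exact h2
        have habs : |f (Q (w : ι → X))| ≤ uu := by
          rw [abs_le]; constructor <;> linarith
        have hzw : (z : ι → X) = ‖z‖ • (w : ι → X) := by
          rw [hw]
          push_cast [Submodule.coe_smul]
          rw [smul_smul, mul_inv_cancel₀ hnz.ne', one_smul]
        have : φS z = ‖z‖ * f (Q (w : ι → X)) := by
          rw [hφSapp, hzw, map_smul, map_smul, smul_eq_mul]
        rw [this, Real.norm_eq_abs, abs_mul, abs_of_nonneg hnz.le, mul_comm]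
        exact mul_le_mul_of_nonneg_right habs hnz.le
    obtain ⟨Φ, hΦext, hΦnorm⟩ := exists_extension_norm_eq S' φS
    set g : ι → StrongDual ℝ X := fun k => Φ.comp (cSingle ι k) with hg
    have hgapp : ∀ (k : ι) (x : X), g k x = Φ (Pi.single k x) := fun k x => rfl
    have hΦsum : ∀ z : ι → X, Φ z = ∑ k, g k (z k) := by
      intro z
      conv_lhs => rw [show z = ∑ k, Pi.single k (z k) from (Finset.univ_sum_single z).symm]
      rw [map_sum]
      exact Finset.sum_congr rfl (fun k _ => rfl)
    have hgsum : ∑ k, ‖g k‖ ≤ ‖Φ‖ := by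
      refine le_of_forall_pos_le_add (fun δ hδ => ?_)
      set m : ℝ := (Fintype.card ι : ℝ) + 1 with hm
      have hm0 : (0:ℝ) < m := by positivity
      have hex2 : ∀ k : ι, ∃ x : X, ‖x‖ ≤ 1 ∧ ‖g k‖ - δ / m ≤ g k x := by
        intro k
        rcases le_or_gt ‖g k‖ (δ / m) with hk | hk
        · exact ⟨0, by simp, by simpa using sub_nonpos.2 hk⟩
        · have hlt : ‖g k‖ - δ / m < ‖g k‖ := by
            have : 0 < δ / m := by positivity
            linarith
          obtain ⟨x, hx1, hx2⟩ := ContinuousLinearMap.exists_lt_apply_of_lt_opNorm (g k) hlt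
          rw [Real.norm_eq_abs] at hx2
          rcases le_or_gt 0 (g k x) with hpos | hneg
          · exact ⟨x, hx1.le, by rw [abs_of_nonneg hpos] at hx2; linarith⟩
          · refine ⟨-x, by simpa using hx1.le, ?_⟩
            rw [map_neg]
            rw [abs_of_neg hneg] at hx2
            linarith
      choose x hx1 hx2 using hex2
      have hxn : ‖x‖ ≤ 1 := pi_norm_le_iff_of_nonneg zero_le_one |>.2 hx1
      have hsum1 : ∑ k, ‖g k‖ ≤ ∑ k, (g k (x k) + δ / m) := by
        refine Finset.sum_le_sum (fun k _ => ?_)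
        have := hx2 k
        linarith
      have hsum2 : ∑ k, (g k (x k) + δ / m) = Φ x + (Fintype.card ι : ℝ) * (δ / m) := by
        rw [Finset.sum_add_distrib, hΦsum x, Finset.sum_const, Finset.card_univ,
          nsmul_eq_mul]
      have hΦx : Φ x ≤ ‖Φ‖ := by
        calc Φ x ≤ ‖Φ x‖ := le_abs_self _
        _ ≤ ‖Φ‖ * ‖x‖ := Φ.le_opNorm x
        _ ≤ ‖Φ‖ * 1 := mul_le_mul_of_nonneg_left hxn (norm_nonneg _)
        _ = ‖Φ‖ := mul_one _
      have hcard : (Fintype.card ι : ℝ) * (δ / m) ≤ δ := by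
        have h1 : (Fintype.card ι : ℝ) ≤ m := by rw [hm]; linarith
        calc (Fintype.card ι : ℝ) * (δ / m) ≤ m * (δ / m) :=
            mul_le_mul_of_nonneg_right h1 (by positivity)
          _ = δ := by field_simp
      linarith
    -- the key duality computation
    set b := Module.finBasis ℝ F with hb
    set ξ : Fin (Module.finrank ℝ F) → (F →ₗ[ℝ] ℝ) := fun i => b.coord i with hξ
    set a : ι → ℝ := fun j => f (Pi.single j 1) with ha
    have hfz : ∀ z : ι → ℝ, f z = ∑ j, z j * a j := by
      intro z
      conv_lhs => rw [show z = ∑ k, Pi.single k (z k) from (Finset.univ_sum_single z).symm]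
      rw [map_sum]
      refine Finset.sum_congr rfl (fun j _ => ?_)
      have : Pi.single j (z j) = z j • (Pi.single j (1:ℝ) : ι → ℝ) := by
        ext i
        rcases eq_or_ne i j with rfl | hij
        · simp
        · simp [Pi.single_apply, hij]
      rw [this, map_smul, smul_eq_mul, ha]
    have hmemS' : ∀ T : F →ₗ[ℝ] X, Ψ T ∈ S' := fun T => ⟨T, rfl⟩
    have hPQ : ∀ (i : Fin (Module.finrank ℝ F)) (x : X),
        (∑ j, (a j * ξ i (u j)) * (h j) x) = ∑ k, ξ i (u k) * g k x := by
      intro i x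
      set T : F →ₗ[ℝ] X := (ξ i).smulRight x with hT
      have hTapp : ∀ v : F, T v = ξ i v • x := fun v => rfl
      have h1 : Φ (Ψ T) = φS ⟨Ψ T, hmemS' T⟩ := hΦext ⟨Ψ T, hmemS' T⟩
      have h2 : φS ⟨Ψ T, hmemS' T⟩ = f (Q (Ψ T)) := hφSapp _
      have h3 : f (Q (Ψ T)) = ∑ j, (a j * ξ i (u j)) * (h j) x := by
        rw [hfz]
        refine Finset.sum_congr rfl (fun j _ => ?_)
        rw [hQapp, hΨapp, hTapp, map_smul, smul_eq_mul]
        ring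
      have h4 : Φ (Ψ T) = ∑ k, ξ i (u k) * g k x := by
        rw [hΦsum]
        refine Finset.sum_congr rfl (fun k _ => ?_)
        rw [hΨapp, hTapp, map_smul, smul_eq_mul]
      rw [← h3, ← h2, ← h1, h4]
    have hkey : f c ≤ ∑ k, ‖g k‖ := by
      have hcoe : ∀ v : F, ((v : StrongDual ℝ (StrongDual ℝ X))) =
          ∑ i, ξ i v • ((b i : F) : StrongDual ℝ (StrongDual ℝ X)) := by
        intro v
        have h0 := congrArg (F.subtype) (b.sum_repr v)
        rw [map_sum] at h0
        rw [show ((v : StrongDual ℝ (StrongDual ℝ X))) = F.subtype v from rfl, ← h0]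
        refine Finset.sum_congr rfl (fun i _ => ?_)
        rw [map_smul]
        simp [hξ, Module.Basis.coord_apply]
      set p : Fin (Module.finrank ℝ F) → StrongDual ℝ X :=
        fun i => ∑ j, (a j * ξ i (u j)) • h j with hp
      set q : Fin (Module.finrank ℝ F) → StrongDual ℝ X :=
        fun i => ∑ k, ξ i (u k) • g k with hq'
      have hpq : ∀ i, p i = q i := by
        intro i
        ext x
        rw [hp, hq']
        simpa [ContinuousLinearMap.sum_apply, ContinuousLinearMap.coe_smul',
          Pi.smul_apply, smul_eq_mul] using hPQ i x
      have step1 : f c = ∑ i, (((b i : F) : StrongDual ℝ (StrongDual ℝ X)) (p i)) := by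
        rw [hfz c]
        have e1 : ∀ j : ι, c j * a j
            = ∑ i, (a j * ξ i (u j)) * (((b i : F) : StrongDual ℝ (StrongDual ℝ X)) (h j)) := by
          intro j
          have e0 : c j = ∑ i, ξ i (u j) * (((b i : F) : StrongDual ℝ (StrongDual ℝ X)) (h j)) := by
            simp only [hc]
            rw [hcoe (u j), ContinuousLinearMap.sum_apply]
            refine Finset.sum_congr rfl (fun i _ => ?_)
            rw [ContinuousLinearMap.coe_smul', Pi.smul_apply, smul_eq_mul]
          rw [e0, Finset.sum_mul]
          refine Finset.sum_congr rfl (fun i _ => ?_)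
          ring
        rw [Finset.sum_congr rfl (fun j _ => e1 j), Finset.sum_comm]
        refine Finset.sum_congr rfl (fun i _ => ?_)
        rw [hp, map_sum]
        refine Finset.sum_congr rfl (fun j _ => ?_)
        rw [map_smul, smul_eq_mul]
      have step2 : f c = ∑ k, (((u k : F) : StrongDual ℝ (StrongDual ℝ X)) (g k)) := by
        rw [step1]
        have e2 : ∀ i, (((b i : F) : StrongDual ℝ (StrongDual ℝ X)) (p i))
            = ∑ k, ξ i (u k) * (((b i : F) : StrongDual ℝ (StrongDual ℝ X)) (g k)) := by
          intro i
          rw [hpq i, hq', map_sum]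
          refine Finset.sum_congr rfl (fun k _ => ?_)
          rw [map_smul, smul_eq_mul]
        rw [Finset.sum_congr rfl (fun i _ => e2 i), Finset.sum_comm]
        refine Finset.sum_congr rfl (fun k _ => ?_)
        rw [hcoe (u k), ContinuousLinearMap.sum_apply]
        refine Finset.sum_congr rfl (fun i _ => ?_)
        rw [ContinuousLinearMap.coe_smul', Pi.smul_apply, smul_eq_mul]
      rw [step2]
      refine Finset.sum_le_sum (fun k _ => ?_)
      have h1 : ((u k : F) : StrongDual ℝ (StrongDual ℝ X)) (g k)
          ≤ ‖((u k : F) : StrongDual ℝ (StrongDual ℝ X)) (g k)‖ := by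
        rw [Real.norm_eq_abs]; exact le_abs_self _
      refine h1.trans ?_
      calc ‖((u k : F) : StrongDual ℝ (StrongDual ℝ X)) (g k)‖
          ≤ ‖((u k : F) : StrongDual ℝ (StrongDual ℝ X))‖ * ‖g k‖ := ContinuousLinearMap.le_opNorm _ _
        _ = ‖g k‖ := by rw [hunorm' k, one_mul]
    exact absurd (lt_of_lt_of_le hfc (hkey.trans (hgsum.trans (le_of_eq_of_le hΦnorm hφSle))))
      (lt_irrefl _)
  -- extract an almost-isometry from the closure membership
  rw [Metric.mem_closure_iff] at hcmem
  obtain ⟨q', hq'mem, hq'dist⟩ := hcmem ε₀ hε₀pos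
  obtain ⟨z, ⟨hzS', hzball⟩, rfl⟩ := hq'mem
  rw [SetLike.mem_coe, hS', LinearMap.mem_range] at hzS'
  obtain ⟨T₀, rfl⟩ := hzS'
  have hzn : ‖Ψ T₀‖ ≤ 1 := by
    rwa [Metric.mem_closedBall, dist_zero_right] at hzball
  have hup : ∀ k : ι, ‖T₀ (u k)‖ ≤ 1 := by
    intro k
    have := norm_le_pi_norm (Ψ T₀) k
    rw [hΨapp] at this
    exact this.trans hzn
  have hlow : ∀ k : ι, 1 - 2 * ε₀ ≤ ‖T₀ (u k)‖ := by
    intro k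
    have hd : dist (c k) (Q (Ψ T₀) k) ≤ dist c (Q (Ψ T₀)) := dist_le_pi_dist _ _ _
    have hd2 : |c k - Q (Ψ T₀) k| < ε₀ := by
      rw [← Real.dist_eq]
      exact lt_of_le_of_lt hd hq'dist
    have hck : 1 - ε₀ < c k := hh2 k
    have hQk : Q (Ψ T₀) k = h k (T₀ (u k)) := by rw [hQapp, hΨapp]
    have h5 : 1 - 2 * ε₀ < h k (T₀ (u k)) := by
      rw [← hQk]
      have := abs_lt.1 hd2
      linarith
    have h6 : h k (T₀ (u k)) ≤ ‖T₀ (u k)‖ := by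
      have := (h k).le_opNorm (T₀ (u k))
      have h7 : h k (T₀ (u k)) ≤ ‖h k (T₀ (u k))‖ := by
        rw [Real.norm_eq_abs]; exact le_abs_self _
      have h8 : ‖h k‖ * ‖T₀ (u k)‖ ≤ 1 * ‖T₀ (u k)‖ :=
        mul_le_mul_of_nonneg_right (hh1 k) (norm_nonneg _)
      rw [one_mul] at h8
      linarith
    linarith
  -- pass from the net to the whole sphere
  letI : NormedSpace ℝ F := Submodule.normedSpace F
  set T₀' : F →L[ℝ] X := LinearMap.toContinuousLinearMap T₀ with hT₀'
  have hT₀'app : ∀ v : F, T₀' v = T₀ v := fun v => rfl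
  set C : ℝ := ‖T₀'‖ with hC
  have hC0 : 0 ≤ C := norm_nonneg _
  have hnet : ∀ v : F, ‖v‖ = 1 → ∃ k : ι, ‖v - u k‖ < ε₀ := by
    intro v hv
    have hvS : v ∈ S := by rw [hSdef, mem_sphere_iff_norm, sub_zero]; exact hv
    have := htcover hvS
    rw [Set.mem_iUnion₂] at this
    obtain ⟨y, hy, hball⟩ := this
    exact ⟨⟨y, hy⟩, by rwa [← dist_eq_norm]⟩
  have hupper : ∀ v : F, ‖v‖ = 1 → ‖T₀ v‖ ≤ 1 + C * ε₀ := by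
    intro v hv
    obtain ⟨k, hk⟩ := hnet v hv
    have h1 : ‖T₀ v - T₀ (u k)‖ = ‖T₀' (v - u k)‖ := by rw [map_sub]; rfl
    have h2 : ‖T₀' (v - u k)‖ ≤ C * ε₀ := by
      calc ‖T₀' (v - u k)‖ ≤ C * ‖v - u k‖ := T₀'.le_opNorm _
        _ ≤ C * ε₀ := mul_le_mul_of_nonneg_left hk.le hC0
    calc ‖T₀ v‖ = ‖T₀ (u k) + (T₀ v - T₀ (u k))‖ := by rw [add_sub_cancel]
      _ ≤ ‖T₀ (u k)‖ + ‖T₀ v - T₀ (u k)‖ := norm_add_le _ _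
      _ ≤ 1 + C * ε₀ := add_le_add (hup k) (h1 ▸ h2)
  have hCb : C ≤ 1 + 2 * ε₀ := by
    have hC2 : C ≤ 1 + C * ε₀ := by
      rw [hC]
      refine ContinuousLinearMap.opNorm_le_bound _ (by positivity) (fun v => ?_)
      have := (sphere_bounds_global T₀ 0 (1 + C * ε₀) (fun w hw =>
        ⟨by simpa using norm_nonneg (T₀ w), hupper w hw⟩) v).2
      simpa [hT₀'app] using this
    nlinarith [hε₀pos, hε₀8]
  have hsphere : ∀ v : F, ‖v‖ = 1 → 1 - ε ≤ ‖T₀ v‖ ∧ ‖T₀ v‖ ≤ 1 + ε := by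
    intro v hv
    obtain ⟨k, hk⟩ := hnet v hv
    have h2 : ‖T₀' (v - u k)‖ ≤ C * ε₀ := by
      calc ‖T₀' (v - u k)‖ ≤ C * ‖v - u k‖ := T₀'.le_opNorm _
        _ ≤ C * ε₀ := mul_le_mul_of_nonneg_left hk.le hC0
    have hCε : C * ε₀ ≤ (1 + 2 * ε₀) * ε₀ := mul_le_mul_of_nonneg_right hCb hε₀pos.le
    have hεε : (1 + 2 * ε₀) * ε₀ ≤ 2 * ε₀ := by nlinarith [hε₀8, hε₀pos]
    constructor
    · have h3 : ‖T₀ (u k)‖ - ‖T₀ v - T₀ (u k)‖ ≤ ‖T₀ v‖ := by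
        have := norm_sub_norm_le (T₀ (u k)) (T₀ v)
        have h4 : ‖T₀ (u k)‖ ≤ ‖T₀ v‖ + ‖T₀ (u k) - T₀ v‖ := norm_le_norm_add_norm_sub' _ _
        have h5 : ‖T₀ (u k) - T₀ v‖ = ‖T₀ v - T₀ (u k)‖ := norm_sub_rev _ _
        linarith
      have h6 : ‖T₀ v - T₀ (u k)‖ ≤ C * ε₀ := by
        rw [show T₀ v - T₀ (u k) = T₀' (v - u k) from by rw [map_sub]; rfl]
        exact h2
      have := hlow k
      have h8 : 4 * ε₀ ≤ ε := by linarith [hε₀ε]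
      linarith
    · have := hupper v hv
      have h8 : 4 * ε₀ ≤ ε := by linarith [hε₀ε]
      linarith [hCε, hεε]
  refine ⟨T₀, fun v => ?_⟩
  have := sphere_bounds_global T₀ (1 - ε) (1 + ε) hsphere v
  exact ⟨this.1, this.2⟩


/-- dual of an isometric equivalence -/
noncomputable def dualCongr {A B : Type*} [NormedAddCommGroup A] [NormedSpace ℝ A]
    [NormedAddCommGroup B] [NormedSpace ℝ B] (e : A ≃ₗᵢ[ℝ] B) :
    StrongDual ℝ A ≃ₗᵢ[ℝ] StrongDual ℝ B where
  toLinearEquiv :=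
    { toFun := fun f => f.comp (e.symm.toContinuousLinearEquiv : B →L[ℝ] A)
      invFun := fun g => g.comp (e.toContinuousLinearEquiv : A →L[ℝ] B)
      map_add' := fun f g => by ext x; simp
      map_smul' := fun c f => by ext x; simp
      left_inv := fun f => by ext x; simp
      right_inv := fun g => by ext x; simp }
  norm_map' := by
    intro f
    apply le_antisymm
    · refine ContinuousLinearMap.opNorm_le_bound _ (norm_nonneg f) (fun x => ?_)
      calc ‖f (e.symm x)‖ ≤ ‖f‖ * ‖e.symm x‖ := f.le_opNorm _
        _ = ‖f‖ * ‖x‖ := by rw [e.symm.norm_map]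
    · refine ContinuousLinearMap.opNorm_le_bound _ (norm_nonneg _) (fun x => ?_)
      have : f x = (f.comp (e.symm.toContinuousLinearEquiv : B →L[ℝ] A)) (e x) := by simp
      rw [this]
      calc ‖(f.comp (e.symm.toContinuousLinearEquiv : B →L[ℝ] A)) (e x)‖
          ≤ ‖f.comp (e.symm.toContinuousLinearEquiv : B →L[ℝ] A)‖ * ‖e x‖ :=
            ContinuousLinearMap.le_opNorm _ _
        _ = ‖f.comp (e.symm.toContinuousLinearEquiv : B →L[ℝ] A)‖ * ‖x‖ := by rw [e.norm_map]

lemma isEvenOrdinal_zero : IsEvenOrdinal 0 := ⟨0, 0, Or.inl rfl, by simp⟩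

lemma Ordinal.IsLimit.isEvenOrdinal {β : Ordinal.{0}} (h : Order.IsSuccLimit β) : IsEvenOrdinal β :=
  ⟨β, 0, Or.inr h, by simp⟩

lemma isEvenOrdinal_succ_succ {α : Ordinal.{0}} (h : IsEvenOrdinal α) :
    IsEvenOrdinal (α + 1 + 1) := by
  obtain ⟨β, n, hβ, rfl⟩ := h
  refine ⟨β, n + 1, hβ, ?_⟩
  push_cast
  rw [mul_add, mul_one, ← add_assoc, add_assoc]
  norm_num



noncomputable def restrictDual {A B : Type*} [NormedAddCommGroup A] [NormedSpace ℝ A]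
    [NormedAddCommGroup B] [NormedSpace ℝ B] (J : A →ₗᵢ[ℝ] B) :
    StrongDual ℝ B →ₗ[ℝ] StrongDual ℝ A where
  toFun f := f.comp J.toContinuousLinearMap
  map_add' f g := by ext x; simp
  map_smul' c f := by ext x; simp

lemma restrictDual_apply {A B : Type*} [NormedAddCommGroup A] [NormedSpace ℝ A]
    [NormedAddCommGroup B] [NormedSpace ℝ B] (J : A →ₗᵢ[ℝ] B)
    (f : StrongDual ℝ B) (x : A) : restrictDual J f x = f (J x) := rfl

lemma restrictDual_norm_le {A B : Type*} [NormedAddCommGroup A] [NormedSpace ℝ A]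
    [NormedAddCommGroup B] [NormedSpace ℝ B] (J : A →ₗᵢ[ℝ] B)
    (f : StrongDual ℝ B) : ‖restrictDual J f‖ ≤ ‖f‖ := by
  refine ContinuousLinearMap.opNorm_le_bound _ (norm_nonneg f) (fun x => ?_)
  rw [restrictDual_apply]
  calc ‖f (J x)‖ ≤ ‖f‖ * ‖J x‖ := f.le_opNorm _
    _ = ‖f‖ * ‖x‖ := by rw [J.norm_map]

/-- casting between ordinal-indexed spaces -/
def spaceCast (space : Ordinal.{0} → Type u) [∀ α, NormedAddCommGroup (space α)]
    [∀ α, NormedSpace ℝ (space α)] {a b : Ordinal.{0}} (h : a = b) :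
    space a ≃ₗᵢ[ℝ] space b := h ▸ LinearIsometryEquiv.refl ℝ (space a)




section LimitCase

variable {R : Type u} [NormedAddCommGroup R] [NormedSpace ℝ R] [CompleteSpace R]
    (space : Ordinal.{0} → Type u)
    [∀ α, NormedAddCommGroup (space α)] [∀ α, NormedSpace ℝ (space α)]
    [∀ α, CompleteSpace (space α)]
    (zeroEquiv : space 0 ≃ₗᵢ[ℝ] R)
    (succEquiv : ∀ α, space (α + 1) ≃ₗᵢ[ℝ] StrongDual ℝ (space α))
    (incl : ∀ β γ, β < γ → IsEvenOrdinal β → IsEvenOrdinal γ → (space β →ₗᵢ[ℝ] space γ))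

lemma limit_case (hsys : IsTransfiniteDualSystem R space zeroEquiv succEquiv incl)
    {β : Ordinal.{0}} (hlim : Order.IsSuccLimit β)
    (IH : ∀ δ, δ < β → IsEvenOrdinal δ →
      FinitelyRepresentable (space (δ + 1)) (StrongDual ℝ R)) :
    FinitelyRepresentable (StrongDual ℝ (space β)) (StrongDual ℝ R) := by
  classical
  have hβe : IsEvenOrdinal β := Ordinal.IsLimit.isEvenOrdinal hlim
  intro ε hε F hF
  obtain ⟨he0, helow, hehigh⟩ := eps_third_bounds hε
  set e := min ε 1 / 3 with he
  have he1 : e ≤ 1/3 := by rw [he]; have := min_le_right ε 1; linarith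
  haveI := hF
  -- a finite (e/2)-net of the unit sphere of F
  set S : Set F := Metric.sphere (0 : F) 1 with hSdef
  have hScomp : IsCompact S := isCompact_sphere _ _
  have hScover : S ⊆ ⋃ y ∈ S, Metric.ball y (e/2) := fun y hy =>
    Set.mem_iUnion₂.2 ⟨y, hy, Metric.mem_ball_self (by positivity)⟩
  obtain ⟨t, hts, htfin, htcover⟩ :=
    hScomp.elim_finite_subcover_image (fun y _ => Metric.isOpen_ball) hScover
  haveI : Fintype ↥t := htfin.fintype
  -- for each net point, a good even ordinal below β
  have hch : ∀ y : ↥t, ∃ δ : Ordinal.{0}, ∃ (h1 : IsEvenOrdinal δ) (h2 : δ < β),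
      1 - e/2 ≤ ‖restrictDual (incl δ β h2 h1 hβe) ((y : F) : StrongDual ℝ (space β))‖ := by
    intro y
    have hyn : ‖((y : F) : StrongDual ℝ (space β))‖ = 1 := by
      have := hts y.2
      rw [hSdef, mem_sphere_iff_norm, sub_zero] at this
      exact this
    have h1 : 1 - e/4 < ‖((y : F) : StrongDual ℝ (space β))‖ := by
      rw [hyn]; linarith
    obtain ⟨x, hx1, hx2⟩ := ContinuousLinearMap.exists_lt_apply_of_lt_opNorm _ h1
    set θ : ℝ := min (e/8) (1 - ‖x‖) with hθ
    have hθ0 : 0 < θ := lt_min (by positivity) (by linarith)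
    have hdense := hsys.2.2 β hlim hβe
    obtain ⟨x', hx'mem, hx'dist⟩ := hdense.exists_dist_lt x hθ0
    rw [Set.mem_iUnion] at hx'mem
    obtain ⟨δ, hx'mem⟩ := hx'mem
    rw [Set.mem_iUnion] at hx'mem
    obtain ⟨hδβ, hx'mem⟩ := hx'mem
    rw [Set.mem_iUnion] at hx'mem
    obtain ⟨hδe, hx'mem⟩ := hx'mem
    obtain ⟨w, hw⟩ := hx'mem
    refine ⟨δ, hδe, hδβ, ?_⟩
    set yf : StrongDual ℝ (space β) := ((y : F) : StrongDual ℝ (space β)) with hyf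
    have hd : ‖x - x'‖ < θ := by rwa [dist_eq_norm] at hx'dist
    have hθ1 : θ ≤ e/8 := min_le_left _ _
    have hθ2 : θ ≤ 1 - ‖x‖ := min_le_right _ _
    have hwn : ‖w‖ ≤ 1 := by
      have hJw : ‖incl δ β hδβ hδe hβe w‖ = ‖w‖ := (incl δ β hδβ hδe hβe).norm_map w
      rw [hw] at hJw
      have h5 : ‖x'‖ ≤ ‖x‖ + ‖x - x'‖ := by
        have := norm_sub_norm_le x' x
        have h6 : ‖x' - x‖ = ‖x - x'‖ := norm_sub_rev _ _
        linarith
      linarith [hJw.symm.le.trans (le_refl ‖x'‖)]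
    have hval : 1 - e/4 - e/8 ≤ ‖yf x'‖ := by
      have h6 : ‖yf x - yf x'‖ ≤ ‖x - x'‖ := by
        rw [← map_sub]
        calc ‖yf (x - x')‖ ≤ ‖yf‖ * ‖x - x'‖ := ContinuousLinearMap.le_opNorm _ _
          _ = ‖x - x'‖ := by rw [hyn, one_mul]
      have h7 := norm_sub_norm_le (yf x) (yf x')
      linarith
    have happ : restrictDual (incl δ β hδβ hδe hβe) yf w = yf x' := by
      rw [restrictDual_apply, hw]
    have h9 : ‖yf x'‖ ≤ ‖restrictDual (incl δ β hδβ hδe hβe) yf‖ := by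
      rw [← happ]
      calc ‖restrictDual (incl δ β hδβ hδe hβe) yf w‖
          ≤ ‖restrictDual (incl δ β hδβ hδe hβe) yf‖ * ‖w‖ := ContinuousLinearMap.le_opNorm _ _
        _ ≤ ‖restrictDual (incl δ β hδβ hδe hβe) yf‖ * 1 :=
            mul_le_mul_of_nonneg_left hwn (norm_nonneg _)
        _ = ‖restrictDual (incl δ β hδβ hδe hβe) yf‖ := mul_one _
    have he8 : (0:ℝ) ≤ e/8 := by positivity
    linarith
  -- choose the sup of the chosen ordinals
  choose d hd1 hd2 hd3 using hch
  set δ : Ordinal.{0} := Finset.univ.sup d with hδdef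
  have hδβ : δ < β := by
    rcases isEmpty_or_nonempty ↥t with hemp | hne
    · rw [hδdef, Finset.univ_eq_empty, Finset.sup_empty]
      exact hlim.pos
    · rw [hδdef, Finset.sup_lt_iff (show (⊥ : Ordinal.{0}) < β from hlim.pos)]
      exact fun y _ => hd2 y
  have hδe : IsEvenOrdinal δ := by
    rcases isEmpty_or_nonempty ↥t with hemp | hne
    · rw [hδdef, Finset.univ_eq_empty, Finset.sup_empty]
      exact isEvenOrdinal_zero
    · obtain ⟨y, _, hy⟩ := Finset.exists_mem_eq_sup Finset.univ Finset.univ_nonempty d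
      rw [hδdef, hy]; exact hd1 y
  -- monotonicity of the restriction norms
  have hmono : ∀ (δ₁ : Ordinal.{0}) (h1 : IsEvenOrdinal δ₁) (h2 : δ₁ < β)
      (hle : δ₁ ≤ δ) (f : StrongDual ℝ (space β)),
      ‖restrictDual (incl δ₁ β h2 h1 hβe) f‖ ≤ ‖restrictDual (incl δ β hδβ hδe hβe) f‖ := by
    intro δ₁ h1 h2 hle f
    rcases eq_or_lt_of_le hle with heq | hlt'
    · subst heq
      exact le_of_eq rfl
    · refine ContinuousLinearMap.opNorm_le_bound _ (norm_nonneg _) (fun x => ?_)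
      rw [restrictDual_apply]
      rw [show incl δ₁ β h2 h1 hβe x
          = incl δ β hδβ hδe hβe (incl δ₁ δ hlt' h1 hδe x) from
        (hsys.1 δ₁ δ β hlt' hδβ h1 hδe hβe x).symm]
      calc ‖f (incl δ β hδβ hδe hβe (incl δ₁ δ hlt' h1 hδe x))‖
          = ‖restrictDual (incl δ β hδβ hδe hβe) f (incl δ₁ δ hlt' h1 hδe x)‖ := rfl
        _ ≤ ‖restrictDual (incl δ β hδβ hδe hβe) f‖ * ‖incl δ₁ δ hlt' h1 hδe x‖ :=
            ContinuousLinearMap.le_opNorm _ _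
        _ = ‖restrictDual (incl δ β hδβ hδe hβe) f‖ * ‖x‖ := by
            rw [(incl δ₁ δ hlt' h1 hδe).norm_map]
  -- lower bound on the whole sphere
  have hlowsphere : ∀ v : F, ‖v‖ = 1 →
      1 - e ≤ ‖restrictDual (incl δ β hδβ hδe hβe) ((v : F) : StrongDual ℝ (space β))‖ := by
    intro v hv
    have hvS : v ∈ S := by rw [hSdef, mem_sphere_iff_norm, sub_zero]; exact hv
    obtain ⟨y, hyt, hball⟩ := Set.mem_iUnion₂.1 (htcover hvS)
    have hdist : ‖v - y‖ < e/2 := by rwa [Metric.mem_ball, dist_eq_norm] at hball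
    have h1 : 1 - e/2 ≤ ‖restrictDual (incl δ β hδβ hδe hβe)
        ((y : F) : StrongDual ℝ (space β))‖ := by
      refine le_trans (hd3 ⟨y, hyt⟩) (hmono _ (hd1 ⟨y, hyt⟩) (hd2 ⟨y, hyt⟩) ?_ _)
      exact Finset.le_sup (Finset.mem_univ _)
    have h2 : ‖restrictDual (incl δ β hδβ hδe hβe) ((v : F) : StrongDual ℝ (space β))
        - restrictDual (incl δ β hδβ hδe hβe) ((y : F) : StrongDual ℝ (space β))‖
        ≤ e/2 := by
      rw [← map_sub]
      have h3 : ((v : F) : StrongDual ℝ (space β))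
          - ((y : F) : StrongDual ℝ (space β))
          = (((v - y : F)) : StrongDual ℝ (space β)) := by push_cast; ring
      rw [h3]
      refine le_trans (restrictDual_norm_le _ _) ?_
      exact le_of_lt hdist
    have h4 := norm_sub_norm_le
      (restrictDual (incl δ β hδβ hδe hβe) ((y : F) : StrongDual ℝ (space β)))
      (restrictDual (incl δ β hδβ hδe hβe) ((v : F) : StrongDual ℝ (space β)))
    have h5 : ‖restrictDual (incl δ β hδβ hδe hβe) ((y : F) : StrongDual ℝ (space β))
        - restrictDual (incl δ β hδβ hδe hβe) ((v : F) : StrongDual ℝ (space β))‖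
        = ‖restrictDual (incl δ β hδβ hδe hβe) ((v : F) : StrongDual ℝ (space β))
        - restrictDual (incl δ β hδβ hδe hβe) ((y : F) : StrongDual ℝ (space β))‖ :=
      norm_sub_rev _ _
    linarith
  -- assemble the map into space (δ+1)
  set ρ : F →ₗ[ℝ] space (δ + 1) :=
    ((succEquiv δ).symm.toLinearEquiv.toLinearMap).comp
      ((restrictDual (incl δ β hδβ hδe hβe)).comp F.subtype) with hρ
  have hρnorm : ∀ v : F,
      ‖ρ v‖ = ‖restrictDual (incl δ β hδβ hδe hβe) ((v : F) : StrongDual ℝ (space β))‖ := by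
    intro v
    exact (succEquiv δ).symm.norm_map _
  have hbounds : ∀ v : F, (1 - e) * ‖v‖ ≤ ‖ρ v‖ ∧ ‖ρ v‖ ≤ 1 * ‖v‖ := by
    intro v
    refine sphere_bounds_global ρ (1 - e) 1 (fun w hw => ?_) v
    constructor
    · rw [hρnorm]; exact hlowsphere w hw
    · rw [hρnorm]
      refine le_trans (restrictDual_norm_le _ _) (le_of_eq hw)
  obtain ⟨T, hT⟩ := (IH δ hδβ hδe).step ρ (1 - e) 1 (by linarith) hbounds e he0
  refine ⟨T, fun v => ?_⟩
  have hTv := hT v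
  have hvn : (0:ℝ) ≤ ‖v‖ := norm_nonneg v
  constructor
  · refine le_trans ?_ hTv.1
    nlinarith [mul_le_mul_of_nonneg_right (ge_iff_le.1 helow) hvn]
  · refine le_trans hTv.2 ?_
    nlinarith

end LimitCase

/-- For a system of transfinite duals of a Banach space `R`, the space `R^(γ)` is finitely
representable in `R* = R^(1)` for every odd ordinal `γ`. -/
theorem statement3 {R : Type u} [NormedAddCommGroup R] [NormedSpace ℝ R] [CompleteSpace R]
    (space : Ordinal.{0} → Type u)
    [∀ α, NormedAddCommGroup (space α)] [∀ α, NormedSpace ℝ (space α)]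
    [∀ α, CompleteSpace (space α)]
    (zeroEquiv : space 0 ≃ₗᵢ[ℝ] R)
    (succEquiv : ∀ α, space (α + 1) ≃ₗᵢ[ℝ] StrongDual ℝ (space α))
    (incl : ∀ β γ, β < γ → IsEvenOrdinal β → IsEvenOrdinal γ → (space β →ₗᵢ[ℝ] space γ))
    (hsys : IsTransfiniteDualSystem R space zeroEquiv succEquiv incl)
    (γ : Ordinal.{0}) (hγ : IsOddOrdinal γ) :
    FinitelyRepresentable (space γ) (StrongDual ℝ R) := by
  revert hγ
  induction γ using Ordinal.induction with
  | h γ IH =>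
  intro hγ
  obtain ⟨α, hαe, rfl⟩ := hγ
  obtain ⟨β, n, hβ0, rfl⟩ := hαe
  rcases n with _ | m
  · -- n = 0 : α = β with β zero or limit
    rcases hβ0 with rfl | hlim
    · -- base case γ = 1
      have h01 : (0 : Ordinal.{0}) + 2 * ((0:ℕ) : Ordinal.{0}) = 0 := by simp
      have E : space (0 + 2 * ((0:ℕ) : Ordinal.{0}) + 1) ≃ₗᵢ[ℝ] StrongDual ℝ R :=
        ((spaceCast space (by rw [h01]) :
            space (0 + 2 * ((0:ℕ) : Ordinal.{0}) + 1) ≃ₗᵢ[ℝ] space (0 + 1)).trans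
          (succEquiv 0)).trans (dualCongr zeroEquiv)
      exact FinitelyRepresentable.of_isometry E.toLinearIsometry
    · -- limit case γ = β + 1
      have hββ : β + 2 * ((0:ℕ) : Ordinal.{0}) = β := by simp
      have hfr : FinitelyRepresentable (StrongDual ℝ (space β)) (StrongDual ℝ R) := by
        refine limit_case space zeroEquiv succEquiv incl hsys hlim (fun δ hδβ hδe => ?_)
        refine IH (δ + 1) ?_ ⟨δ, hδe, rfl⟩
        calc δ + 1 < β + 1 := by
              rwa [Ordinal.add_one_eq_succ, Ordinal.add_one_eq_succ, Order.succ_lt_succ_iff]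
          _ = β + 2 * ((0:ℕ) : Ordinal.{0}) + 1 := by rw [hββ]
      have E : space (β + 2 * ((0:ℕ) : Ordinal.{0}) + 1) ≃ₗᵢ[ℝ] StrongDual ℝ (space β) :=
        (spaceCast space (by rw [hββ]) :
            space (β + 2 * ((0:ℕ) : Ordinal.{0}) + 1) ≃ₗᵢ[ℝ] space (β + 1)).trans (succEquiv β)
      exact hfr.congr_left E
  · -- successor of successor: α = α' + 2 with α' = β + 2m
    set α' : Ordinal.{0} := β + 2 * (m : Ordinal.{0}) with hα'
    have hα'e : IsEvenOrdinal α' := ⟨β, m, hβ0, rfl⟩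
    have heq : β + 2 * ((m+1 : ℕ) : Ordinal.{0}) = α' + 1 + 1 := by
      rw [hα']
      push_cast
      rw [mul_add, mul_one, ← add_assoc, show (2:Ordinal.{0}) = 1 + 1 from
        (one_add_one_eq_two).symm, ← add_assoc]
    have hlt : α' + 1 < β + 2 * ((m+1 : ℕ) : Ordinal.{0}) + 1 := by
      rw [heq]
      have s1 : α' + 1 < α' + 1 + 1 := by
        rw [Ordinal.add_one_eq_succ (α' + 1)]; exact Order.lt_succ _
      have s2 : α' + 1 + 1 < α' + 1 + 1 + 1 := by
        rw [Ordinal.add_one_eq_succ (α' + 1 + 1)]; exact Order.lt_succ _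
      exact s1.trans s2
    have hIH : FinitelyRepresentable (space (α' + 1)) (StrongDual ℝ R) :=
      IH (α' + 1) hlt ⟨α', hα'e, rfl⟩
    have hbd := bidual_finitelyRepresentable (space (α' + 1))
    have E : space (β + 2 * ((m+1 : ℕ) : Ordinal.{0}) + 1) ≃ₗᵢ[ℝ]
        StrongDual ℝ (StrongDual ℝ (space (α' + 1))) := by
      refine ((spaceCast space (by rw [heq]) :
          space (β + 2 * ((m+1 : ℕ) : Ordinal.{0}) + 1) ≃ₗᵢ[ℝ] space (α' + 1 + 1 + 1)).trans
        (succEquiv (α' + 1 + 1))).trans (dualCongr (succEquiv (α' + 1)))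
    exact (hbd.trans hIH).congr_left E
end

section
/- Let X be a Banach space in which ℓ₁ is finitely representable. Then the dual space (C([0,1]))* of the Banach space C([0,1]) of continuous real-valued functions on [0,1] with the supremum norm is finitely representable in X; moreover C([0,1]) is separable and (C([0,1]))* is nonseparable. -/
open scoped unitInterval

noncomputable section AuxBernstein

abbrev KK := Set.Icc (0:ℝ) 1
abbrev CK := C(KK, ℝ)
abbrev DK := StrongDual ℝ CK

/-- The sum `∑ₖ |φ(bernstein n k)|`. -/
def bA (n : ℕ) (φ : DK) : ℝ := ∑ k : Fin (n+1), |φ (bernstein n k)|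

lemma bA_nonneg (n : ℕ) (φ : DK) : 0 ≤ bA n φ :=
  Finset.sum_nonneg fun _ _ => abs_nonneg _

lemma bA_le (n : ℕ) (φ : DK) : bA n φ ≤ ‖φ‖ := by
  classical
  set s : Fin (n+1) → ℝ := fun k => if 0 ≤ φ (bernstein n k) then 1 else -1 with hs
  have habs : ∀ k, s k * φ (bernstein n k) = |φ (bernstein n k)| := by
    intro k
    by_cases hk : 0 ≤ φ (bernstein n k)
    · simp [hs, hk, abs_of_nonneg hk]
    · simp [hs, hk, abs_of_neg (lt_of_not_ge hk)]
  set g : CK := ∑ k : Fin (n+1), s k • bernstein n k with hg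
  have hφg : φ g = bA n φ := by
    rw [hg, map_sum]
    simp only [map_smul, smul_eq_mul]
    exact Finset.sum_congr rfl fun k _ => habs k
  have hgnorm : ‖g‖ ≤ 1 := by
    apply ContinuousMap.norm_le _ zero_le_one |>.mpr
    intro x
    have : g x = ∑ k : Fin (n+1), s k * bernstein n k x := by
      rw [hg]
      simp [ContinuousMap.coe_sum, Finset.sum_apply]
    rw [Real.norm_eq_abs, this]
    calc |∑ k : Fin (n+1), s k * bernstein n k x|
        ≤ ∑ k : Fin (n+1), |s k * bernstein n k x| := Finset.abs_sum_le_sum_abs _ _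
      _ ≤ ∑ k : Fin (n+1), bernstein n k x := by
          apply Finset.sum_le_sum
          intro k _
          have h1 : |s k| = 1 := by by_cases hk : 0 ≤ φ (bernstein n k) <;> simp [hs, hk]
          rw [abs_mul, h1, one_mul, abs_of_nonneg bernstein_nonneg]
      _ = 1 := bernstein.probability n x
  calc bA n φ = φ g := hφg.symm
    _ ≤ ‖φ‖ * ‖g‖ := le_trans (le_abs_self _) (φ.le_opNorm g)
    _ ≤ ‖φ‖ := by nlinarith [norm_nonneg φ, norm_nonneg g]

lemma bA_lower (φ : DK) {η : ℝ} (hη : 0 < η) :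
    ∀ᶠ n in Filter.atTop, ‖φ‖ - η ≤ bA n φ := by
  rcases le_or_gt ‖φ‖ η with hle | hlt
  · filter_upwards with n
    have h0 : (0:ℝ) ≤ bA n φ := bA_nonneg n φ
    linarith
  · have h2 : ‖φ‖ - η/2 < ‖φ‖ := by linarith
    obtain ⟨f, hf1, hf2⟩ := φ.exists_lt_apply_of_lt_opNorm h2
    set g : CK := if 0 ≤ φ f then f else -f with hgdef
    have hgnorm : ‖g‖ ≤ 1 := by
      by_cases hc : 0 ≤ φ f <;> simp [hgdef, hc, le_of_lt hf1, norm_neg]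
    have hφg : ‖φ‖ - η/2 < φ g := by
      by_cases hc : 0 ≤ φ f
      · simpa [hgdef, hc, abs_of_nonneg hc] using hf2
      · rw [Real.norm_eq_abs, abs_of_neg (lt_of_not_ge hc)] at hf2
        simpa [hgdef, hc] using hf2
    have happrox := bernsteinApproximation_uniform g
    rw [Metric.tendsto_atTop] at happrox
    obtain ⟨N, hN⟩ := happrox (η/(2*(‖φ‖+1))) (by positivity)
    filter_upwards [Filter.eventually_ge_atTop N] with n hn
    have hdist := hN n hn
    rw [dist_eq_norm] at hdist
    have hBg : φ (bernsteinApproximation n g)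
        = ∑ k : Fin (n+1), g (bernstein.z k) * φ (bernstein n k) := by
      have : bernsteinApproximation n g = ∑ k : Fin (n+1), g (bernstein.z k) • bernstein n k := by
        ext x; simp [bernsteinApproximation.apply, mul_comm]
      rw [this, map_sum]; simp [map_smul]
    have hB_le : φ (bernsteinApproximation n g) ≤ bA n φ := by
      rw [hBg]
      calc ∑ k : Fin (n+1), g (bernstein.z k) * φ (bernstein n k)
          ≤ ∑ k : Fin (n+1), |g (bernstein.z k) * φ (bernstein n k)| :=
            Finset.sum_le_sum fun k _ => le_abs_self _
        _ ≤ ∑ k : Fin (n+1), |φ (bernstein n k)| := by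
            apply Finset.sum_le_sum
            intro k _
            rw [abs_mul]
            have : |g (bernstein.z k)| ≤ 1 := by
              have := g.norm_coe_le_norm (bernstein.z k)
              rw [Real.norm_eq_abs] at this
              linarith
            nlinarith [abs_nonneg (φ (bernstein n k))]
        _ = bA n φ := rfl
    have hdiff : φ g - φ (bernsteinApproximation n g) ≤ η/2 := by
      have hsub : φ g - φ (bernsteinApproximation n g) = φ (g - bernsteinApproximation n g) := by
        rw [map_sub]
      rw [hsub]
      calc φ (g - bernsteinApproximation n g) ≤ ‖φ‖ * ‖g - bernsteinApproximation n g‖ :=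
            le_trans (le_abs_self _) (φ.le_opNorm _)
        _ ≤ ‖φ‖ * (η/(2*(‖φ‖+1))) := by
            apply mul_le_mul_of_nonneg_left _ (norm_nonneg φ)
            rw [← norm_sub_rev]
            linarith
        _ ≤ η/2 := by
            rw [mul_div_assoc', div_le_div_iff₀ (by positivity) (by norm_num)]
            nlinarith [norm_nonneg φ]
    linarith

lemma bA_sub_le (n : ℕ) (φ ψ : DK) : bA n ψ - bA n φ ≤ ‖ψ - φ‖ := by
  calc bA n ψ - bA n φ = ∑ k : Fin (n+1), (|ψ (bernstein n k)| - |φ (bernstein n k)|) := by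
        rw [bA, bA, Finset.sum_sub_distrib]
    _ ≤ ∑ k : Fin (n+1), |(ψ - φ) (bernstein n k)| := by
        apply Finset.sum_le_sum
        intro k _
        rw [ContinuousLinearMap.sub_apply]
        exact abs_sub_abs_le_abs_sub _ _
    _ ≤ ‖ψ - φ‖ := bA_le n (ψ - φ)

lemma bA_smul (n : ℕ) (c : ℝ) (φ : DK) : bA n (c • φ) = |c| * bA n φ := by
  rw [bA, bA, Finset.mul_sum]
  apply Finset.sum_congr rfl
  intro k _
  rw [ContinuousLinearMap.smul_apply, smul_eq_mul, abs_mul]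

lemma bA_uniform_lower (F : Subspace ℝ DK) (hF : FiniteDimensional ℝ F)
    {δ : ℝ} (hδ : 0 < δ) :
    ∃ n : ℕ, ∀ x : F, (1 - δ) * ‖x‖ ≤ bA n (x : DK) := by
  haveI := hF
  haveI : ProperSpace F := by
    letI hNS : NormedSpace ℝ F := Submodule.normedSpace (𝕜 := ℝ) (E := DK) F
    exact @FiniteDimensional.proper ℝ _ F _ hNS _ (by exact hF)
  have hcpt : IsCompact (Metric.sphere (0:F) 1) := isCompact_sphere _ _
  obtain ⟨t, htfin, htcov⟩ :=
    ((Metric.totallyBounded_iff (s := Metric.sphere (0:F) 1)).mp (by exact hcpt.totallyBounded)) (δ/4) (by positivity)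
  have hev : ∀ᶠ n in Filter.atTop, ∀ y ∈ t, ‖(y : DK)‖ - δ/4 ≤ bA n (y : DK) := by
    rw [Filter.eventually_all_finite htfin]
    intro y _
    exact bA_lower (y : DK) (by positivity)
  obtain ⟨n, hn⟩ := hev.exists
  refine ⟨n, ?_⟩
  have hsphere : ∀ x : F, ‖x‖ = 1 → (1 - δ) ≤ bA n (x : DK) := by
    intro x hx
    have hxs : x ∈ Metric.sphere (0:F) 1 := by
      exact mem_sphere_zero_iff_norm.mpr hx
    obtain ⟨y, hyt, hxy⟩ := Set.mem_iUnion₂.mp (htcov hxs)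
    replace hxy : ‖x - y‖ < δ/4 := lt_of_eq_of_lt (dist_eq_norm x y).symm (Metric.mem_ball.mp hxy)
    have hnorm_coe : ∀ z : F, ‖(z : DK)‖ = ‖z‖ := fun z => rfl
    have hsub : ((x - y : F) : DK) = (x : DK) - (y : DK) := rfl
    have h1 : ‖(x : DK) - (y : DK)‖ < δ/4 := by
      rw [← hsub, hnorm_coe]; exact hxy
    have h2 : ‖(y : DK)‖ ≥ 1 - δ/4 := by
      have := norm_sub_norm_le ((x : DK)) ((y : DK))
      rw [hnorm_coe x, hx] at this
      linarith
    have h3 := bA_sub_le n (x : DK) (y : DK)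
    replace h3 : bA n ↑y - bA n ↑x ≤ ‖(x:DK) - (y:DK)‖ := h3.trans_eq (norm_sub_rev (y:DK) (x:DK))
    have h4 := hn y hyt
    linarith
  intro x
  by_cases hx0 : x = 0
  · have hz : ((x : DK)) = 0 := by rw [hx0]; rfl
    rw [hz, hx0]
    have h0 : ‖(0:F)‖ = 0 := (norm_zero (E := DK))
    rw [h0, mul_zero]
    exact bA_nonneg n 0
  · have hxne : ‖x‖ ≠ 0 := fun hc => hx0 (Subtype.ext ((norm_eq_zero (a := (x:DK))).mp hc))
    have hxpos : 0 < ‖x‖ := lt_of_le_of_ne (norm_nonneg x) (Ne.symm hxne)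
    set u : F := ‖x‖⁻¹ • x with hu
    have hunorm : ‖u‖ = 1 := by
      rw [hu]
      show ‖‖x‖⁻¹ • (x : DK)‖ = 1
      exact (@norm_smul ℝ DK _ _ _ NormedSpace.toNormSMulClass (‖x‖⁻¹) (x:DK)).trans (by rw [norm_inv, norm_norm]; exact inv_mul_cancel₀ (ne_of_gt hxpos))
    have hxu : (x : DK) = ‖x‖ • (u : DK) := by
      rw [hu]
      push_cast
      rw [smul_smul, mul_inv_cancel₀ (ne_of_gt hxpos), one_smul]
    have := hsphere u hunorm
    calc (1 - δ) * ‖x‖ = ‖x‖ * (1 - δ) := by ring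
      _ ≤ ‖x‖ * bA n (u : DK) := by
          apply mul_le_mul_of_nonneg_left this (le_of_lt hxpos)
      _ = bA n (x : DK) := by
          rw [hxu, bA_smul, abs_of_pos hxpos]

lemma bernstein_eq_zero {n ν : ℕ} (h : n < ν) : (bernstein n ν : C(I,ℝ)) = 0 := by
  ext x
  simp [bernstein_apply, Nat.choose_eq_zero_of_lt h]

lemma memℓp_bern (n : ℕ) (φ : DK) : Memℓp (fun j : ℕ => φ (bernstein n j)) 1 := by
  apply memℓp_gen
  apply summable_of_ne_finset_zero (s := Finset.range (n+1))
  intro j hj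
  have hnj : n < j := by simpa using Nat.lt_of_succ_le (Nat.not_lt.mp (by simpa using hj))
  rw [bernstein_eq_zero hnj]
  simp

/-- The embedding of the dual into ℓ¹ given by Bernstein coefficients. -/
def bS (n : ℕ) : DK →ₗ[ℝ] lp (fun _ : ℕ => ℝ) 1 where
  toFun φ := ⟨fun j => φ (bernstein n j), memℓp_bern n φ⟩
  map_add' φ ψ := by ext j; simp; rfl
  map_smul' c φ := by ext j; simp

lemma bS_norm (n : ℕ) (φ : DK) : ‖bS n φ‖ = bA n φ := by
  have h1 : (1 : ENNReal).toReal = 1 := ENNReal.toReal_one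
  rw [lp.norm_eq_tsum_rpow (by rw [h1]; norm_num) (bS n φ)]
  have hcoe : ∀ j : ℕ, (bS n φ : ∀ _ : ℕ, ℝ) j = φ (bernstein n j) := fun j => rfl
  have h2 : ∀ j : ℕ, ‖(bS n φ : ∀ _ : ℕ, ℝ) j‖ ^ (1:ENNReal).toReal = |φ (bernstein n j)| := by
    intro j; rw [h1, Real.rpow_one, hcoe, Real.norm_eq_abs]
  rw [tsum_congr h2]
  have h3 : ∑' j : ℕ, |φ (bernstein n j)| = ∑ j ∈ Finset.range (n+1), |φ (bernstein n j)| := by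
    apply tsum_eq_sum
    intro j hj
    have hnj : n < j := Nat.lt_of_succ_le (Nat.not_lt.mp (by simpa using hj))
    rw [bernstein_eq_zero hnj]
    simp
  rw [h3, h1, Finset.sum_range fun j => |φ (bernstein n j)|]
  simp [bA]

/-- Dirac evaluation functional. -/
def diracD (t : KK) : DK :=
  LinearMap.mkContinuous
    { toFun := fun f : CK => f t
      map_add' := fun f g => rfl
      map_smul' := fun c f => rfl } 1
    (fun f => by simpa using f.norm_coe_le_norm t)

lemma dirac_sep {t s : KK} (hts : t ≠ s) : 1 ≤ ‖diracD t - diracD s‖ := by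
  set c : ℝ := dist t s with hc
  have hcpos : 0 < c := dist_pos.mpr hts
  set f : CK := ⟨fun x => min 1 (dist x s / c),
    continuous_const.min ((continuous_id.dist continuous_const).div_const c)⟩ with hf
  have hft : f t = 1 := by
    simp only [hf, ContinuousMap.coe_mk]
    rw [← hc, div_self (ne_of_gt hcpos), min_self]
  have hfs : f s = 0 := by
    simp only [hf, ContinuousMap.coe_mk]
    rw [dist_self, zero_div]
    simp
  have hfnorm : ‖f‖ ≤ 1 := by
    apply ContinuousMap.norm_le _ zero_le_one |>.mpr
    intro x
    simp only [hf, ContinuousMap.coe_mk, Real.norm_eq_abs]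
    rw [abs_of_nonneg (le_min zero_le_one (div_nonneg dist_nonneg (le_of_lt hcpos)))]
    exact min_le_left _ _
  have h1 : (diracD t - diracD s) f = 1 := by
    have : (diracD t - diracD s) f = f t - f s := rfl
    rw [this, hft, hfs, sub_zero]
  calc (1:ℝ) = (diracD t - diracD s) f := h1.symm
    _ ≤ ‖diracD t - diracD s‖ * ‖f‖ :=
        le_trans (le_abs_self _) ((diracD t - diracD s).le_opNorm f)
    _ ≤ ‖diracD t - diracD s‖ := by
        nlinarith [norm_nonneg (diracD t - diracD s), norm_nonneg f]

lemma not_sep_DK : ¬ TopologicalSpace.SeparableSpace DK := by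
  intro hsep
  obtain ⟨D, hDc, hDd⟩ := TopologicalSpace.exists_countable_dense DK
  have hex : ∀ t : KK, ∃ y, y ∈ D ∧ dist (diracD t) y < 1/2 := by
    intro t
    obtain ⟨y, hy1, hy2⟩ := hDd.exists_dist_lt (diracD t) (show (0:ℝ) < 1/2 by norm_num)
    exact ⟨y, hy1, hy2⟩
  choose g hg1 hg2 using hex
  haveI : Countable D := hDc.to_subtype
  have hinj : Function.Injective (fun t : KK => (⟨g t, hg1 t⟩ : D)) := by
    intro a b hab
    by_contra hne
    have hgab : g a = g b := congrArg Subtype.val hab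
    have h1 : (1:ℝ) ≤ dist (diracD a) (diracD b) := by
      exact le_of_le_of_eq (dirac_sep hne) (dist_eq_norm (diracD a) (diracD b)).symm
    have h2 : dist (diracD a) (diracD b) ≤ dist (diracD a) (g a) + dist (g b) (diracD b) := by
      rw [hgab]
      exact dist_triangle _ _ _
    have h3 := hg2 a
    have h4 := hg2 b
    rw [dist_comm] at h4
    linarith
  haveI : Countable KK := Function.Injective.countable hinj
  have hcnt : (Set.Icc (0:ℝ) 1).Countable := Set.countable_coe_iff.mp this
  have hmk : Cardinal.mk (Set.Icc (0:ℝ) 1) = Cardinal.continuum :=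
    Cardinal.mk_Icc_real (show (0:ℝ) < 1 by norm_num)
  have hle : Cardinal.mk (Set.Icc (0:ℝ) 1) ≤ Cardinal.aleph0 :=
    Cardinal.mk_le_aleph0_iff.mpr (Set.countable_coe_iff.mpr hcnt)
  rw [hmk] at hle
  exact Cardinal.aleph0_lt_continuum.not_ge hle

end AuxBernstein

/-- If `ℓ₁` is finitely representable in a Banach space `X`, then `(C[0,1])*` is finitely
representable in `X`; moreover `C[0,1]` is separable and `(C[0,1])*` is nonseparable. -/
theorem statement14 {X : Type*} [NormedAddCommGroup X] [NormedSpace ℝ X] [CompleteSpace X]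
    (h : FinitelyRepresentable (lp (fun _ : ℕ => ℝ) 1) X) :
    FinitelyRepresentable (StrongDual ℝ C(Set.Icc (0:ℝ) 1, ℝ)) X ∧
    TopologicalSpace.SeparableSpace C(Set.Icc (0:ℝ) 1, ℝ) ∧
    ¬ TopologicalSpace.SeparableSpace (StrongDual ℝ C(Set.Icc (0:ℝ) 1, ℝ)) := by
  refine ⟨?_, inferInstance, not_sep_DK⟩
  intro ε hε F hF
  haveI := hF
  set ε' : ℝ := min ε (1/2) with hε'def
  have hε' : 0 < ε' := lt_min hε (by norm_num)
  have hε'le : ε' ≤ ε := min_le_left _ _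
  have hε'half : ε' ≤ 1/2 := min_le_right _ _
  obtain ⟨n, hns⟩ := bA_uniform_lower F hF (show 0 < ε'/2 by positivity)
  set S : F →ₗ[ℝ] lp (fun _ : ℕ => ℝ) 1 := (bS n).comp F.subtype with hSdef
  haveI : FiniteDimensional ℝ (LinearMap.range S) := inferInstance
  obtain ⟨U, hU⟩ := h (ε'/2) (by positivity) (LinearMap.range S) inferInstance
  refine ⟨U.comp S.rangeRestrict, ?_⟩
  intro x
  have hSx : ‖S x‖ = bA n (x : DK) := bS_norm n (x : DK)
  have hxnorm : ‖(x : DK)‖ = ‖x‖ := rfl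
  have hlow : (1 - ε'/2) * ‖x‖ ≤ ‖S x‖ := by rw [hSx]; exact hns x
  have hup : ‖S x‖ ≤ ‖x‖ := by rw [hSx, ← hxnorm]; exact bA_le n _
  have hrr : ‖S.rangeRestrict x‖ = ‖S x‖ := rfl
  obtain ⟨hU1, hU2⟩ := hU (S.rangeRestrict x)
  have happ : (U.comp S.rangeRestrict) x = U (S.rangeRestrict x) := rfl
  rw [hrr] at hU1 hU2
  rw [happ]
  have hxpos : 0 ≤ ‖x‖ := norm_nonneg x
  have hSpos : 0 ≤ ‖S x‖ := norm_nonneg _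
  constructor
  · nlinarith
  · nlinarith
end
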